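/- For every positive integer L, G_{L,1}(q) = H_{L,1}(q)/(1−q^L), where G_{L,1}(q) = q/(q;q)_{L+1} − Σ_{n≥1} (q^{2n}/(1−q^n))·C(L+n−1,n−1)_q and H_{L,1}(q) = q/((q;q)_{L−1}(1−q^{L+1})) − (1/(q²;q)_L − 1). -/

import Mathlib

open PowerSeries

/-- `(q^s; q)_n` as a formal power series in `q = X` over `ℚ`. -/
noncomputable def qp (s n : ℕ) : PowerSeries ℚ :=
  ∏ i ∈ Finset.range n, (1 - (X : PowerSeries ℚ) ^ (s + i))

/-- The Gaussian binomial coefficient `C(m, k)_q = (q;q)_m / ((q;q)_k (q;q)_{m-k})`. -/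
noncomputable def gb (m k : ℕ) : PowerSeries ℚ := qp 1 m * (qp 1 k)⁻¹ * (qp 1 (m - k))⁻¹

namespace Stmt15

lemma cc_one_sub (j : ℕ) (hj : 1 ≤ j) :
    constantCoeff (1 - (X : PowerSeries ℚ) ^ j) = 1 := by
  simp [map_sub, map_pow, constantCoeff_X, zero_pow (show j ≠ 0 by omega)]

lemma ne_sub (j : ℕ) (hj : 1 ≤ j) : (1 - (X : PowerSeries ℚ) ^ j) ≠ 0 := by
  intro h
  have := cc_one_sub j hj
  rw [h] at this
  simp at this

lemma sub_mul_inv (j : ℕ) (hj : 1 ≤ j) :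
    (1 - (X : PowerSeries ℚ) ^ j) * (1 - (X : PowerSeries ℚ) ^ j)⁻¹ = 1 :=
  PowerSeries.mul_inv_cancel _ (by rw [cc_one_sub j hj]; exact one_ne_zero)

lemma cc_qp (s n : ℕ) (hs : 1 ≤ s) : constantCoeff (qp s n) = 1 := by
  rw [qp, map_prod]
  exact Finset.prod_eq_one fun i _ => cc_one_sub _ (by omega)

lemma qp_mul_inv (s n : ℕ) (hs : 1 ≤ s) : qp s n * (qp s n)⁻¹ = 1 :=
  PowerSeries.mul_inv_cancel _ (by rw [cc_qp s n hs]; exact one_ne_zero)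

lemma qp_zero (s : ℕ) : qp s 0 = 1 := by simp [qp]

lemma qp_succ (n : ℕ) : qp 1 (n + 1) = qp 1 n * (1 - (X : PowerSeries ℚ) ^ (n + 1)) := by
  rw [qp, Finset.prod_range_succ, add_comm 1 n]; rfl

lemma qp2_succ (n : ℕ) : qp 2 (n + 1) = qp 2 n * (1 - (X : PowerSeries ℚ) ^ (n + 2)) := by
  rw [qp, Finset.prod_range_succ, add_comm 2 n]; rfl

lemma inv_qp_succ (n : ℕ) :
    (qp 1 (n + 1))⁻¹ = (1 - (X : PowerSeries ℚ) ^ (n + 1))⁻¹ * (qp 1 n)⁻¹ := by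
  rw [qp_succ, PowerSeries.mul_inv_rev]

lemma gb_zero (m : ℕ) : gb m 0 = 1 := by
  rw [gb, qp_zero, inv_one, mul_one, Nat.sub_zero, qp_mul_inv 1 m le_rfl]

/-- coefficient congruence under multiplication -/
lemma coeff_mul_congr {A B C : PowerSeries ℚ} {i : ℕ}
    (h : ∀ j ≤ i, coeff j A = coeff j B) :
    coeff i (A * C) = coeff i (B * C) := by
  rw [coeff_mul, coeff_mul]
  refine Finset.sum_congr rfl fun p hp => ?_
  rw [Finset.HasAntidiagonal.mem_antidiagonal] at hp
  rw [h p.1 (by omega)]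

lemma coeff_X_pow_mul_zero {k i : ℕ} (f : PowerSeries ℚ) (h : i < k) :
    coeff i ((X : PowerSeries ℚ) ^ k * f) = 0 := by
  have : (X : PowerSeries ℚ) ^ k ∣ X ^ k * f := dvd_mul_right _ _
  exact (PowerSeries.X_pow_dvd_iff.mp this) i h

/-- q-Pascal: `C(c+b+2, b+1) = C(c+b+1, b+1) + q^(c+1) C(c+b+1, b)`. -/
lemma pascal (c b : ℕ) :
    gb (c + 1 + b + 1) (b + 1)
      = gb (c + 1 + b) (b + 1) + (X : PowerSeries ℚ) ^ (c + 1) * gb (c + 1 + b) b := by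
  have h1 : c + 1 + b + 1 - (b + 1) = c + 1 := by omega
  have h2 : c + 1 + b - (b + 1) = c := by omega
  have h3 : c + 1 + b - b = c + 1 := by omega
  have e : c + 1 + b + 1 = c + b + 1 + 1 := by omega
  have key : (1 - (X : PowerSeries ℚ) ^ (c + b + 2)) * (1 - X ^ (b + 1))⁻¹ * (1 - X ^ (c + 1))⁻¹
      = (1 - X ^ (b + 1))⁻¹ + X ^ (c + 1) * (1 - X ^ (c + 1))⁻¹ := by
    have hb := sub_mul_inv (b + 1) (by omega)
    have hc := sub_mul_inv (c + 1) (by omega)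
    apply mul_right_cancel₀
      (mul_ne_zero (ne_sub (b + 1) (by omega)) (ne_sub (c + 1) (by omega)))
    linear_combination ((1 - (X : PowerSeries ℚ) ^ (c + b + 2)) * (1 - X ^ (c + 1))⁻¹
        * (1 - X ^ (c + 1)) - (1 - X ^ (c + 1))) * hb + (1 - (X : PowerSeries ℚ) ^ (c + 1)) * hc
  have e3 : c + 1 + b = c + b + 1 := by omega
  rw [gb, gb, gb, h1, h2, h3, e, e3, qp_succ (c + b + 1), inv_qp_succ b, inv_qp_succ c]
  have e2 : c + b + 1 + 1 = c + b + 2 := by omega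
  rw [e2]
  linear_combination (qp 1 (c + b + 1) * (qp 1 b)⁻¹ * (qp 1 c)⁻¹) * key

/-- per-term lemma (A) -/
lemma termA (c b : ℕ) :
    (X : PowerSeries ℚ) ^ (2 * (b + 1)) * (1 - X ^ (b + 1))⁻¹ * gb (c + b + 1) b
      = X ^ (2 * (b + 1)) * gb (c + b + 1) (b + 1) * (1 - X ^ (c + 1))⁻¹ := by
  have h1 : c + b + 1 - b = c + 1 := by omega
  have h2 : c + b + 1 - (b + 1) = c := by omega
  rw [gb, gb, h1, h2, inv_qp_succ b, inv_qp_succ c]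
  ring

/-- truncated q-binomial theorem -/
lemma qbin (M : ℕ) : ∀ L, 1 ≤ L → ∀ i ≤ M,
    coeff i ((qp 2 L)⁻¹)
      = coeff i (∑ n ∈ Finset.range (M + 1), (X : PowerSeries ℚ) ^ (2 * n) * gb (L + n - 1) n) := by
  intro L hL
  induction L, hL using Nat.le_induction with
  | base =>
    intro i hi
    have hgb : ∀ n : ℕ, gb (1 + n - 1) n = 1 := by
      intro n
      have : 1 + n - 1 = n := by omega
      rw [this, gb, Nat.sub_self, qp_zero, inv_one, mul_one, qp_mul_inv 1 n le_rfl]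
    have hS : (∑ n ∈ Finset.range (M + 1), (X : PowerSeries ℚ) ^ (2 * n) * gb (1 + n - 1) n)
        = ∑ n ∈ Finset.range (M + 1), ((X : PowerSeries ℚ) ^ 2) ^ n := by
      refine Finset.sum_congr rfl fun n _ => ?_
      rw [hgb n, mul_one, pow_mul]
    have hq1 : qp 2 1 = 1 - (X : PowerSeries ℚ) ^ 2 := by
      rw [qp]; simp
    have hgeom : (∑ n ∈ Finset.range (M + 1), ((X : PowerSeries ℚ) ^ 2) ^ n)
        * (1 - (X : PowerSeries ℚ) ^ 2) = 1 - X ^ (2 * (M + 1)) := by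
      have := geom_sum_mul ((X : PowerSeries ℚ) ^ 2) (M + 1)
      rw [← pow_mul] at this
      linear_combination -this
    have hS2 : (∑ n ∈ Finset.range (M + 1), ((X : PowerSeries ℚ) ^ 2) ^ n)
        = (1 - (X : PowerSeries ℚ) ^ (2 * (M + 1))) * (1 - X ^ 2)⁻¹ := by
      have h2 := sub_mul_inv 2 (by omega)
      calc (∑ n ∈ Finset.range (M + 1), ((X : PowerSeries ℚ) ^ 2) ^ n)
          = (∑ n ∈ Finset.range (M + 1), ((X : PowerSeries ℚ) ^ 2) ^ n)
            * ((1 - (X : PowerSeries ℚ) ^ 2) * (1 - X ^ 2)⁻¹) := by rw [h2, mul_one]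
        _ = ((∑ n ∈ Finset.range (M + 1), ((X : PowerSeries ℚ) ^ 2) ^ n)
            * (1 - (X : PowerSeries ℚ) ^ 2)) * (1 - X ^ 2)⁻¹ := by ring
        _ = (1 - (X : PowerSeries ℚ) ^ (2 * (M + 1))) * (1 - X ^ 2)⁻¹ := by rw [hgeom]
    rw [hS, hS2, hq1]
    have : ((1 - (X : PowerSeries ℚ) ^ 2)⁻¹ : PowerSeries ℚ)
        = 1 * (1 - (X : PowerSeries ℚ) ^ 2)⁻¹ := by rw [one_mul]
    have hcoe : coeff i ((1 - (X : PowerSeries ℚ) ^ (2 * (M + 1))) * (1 - X ^ 2)⁻¹)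
        = coeff i ((1 : PowerSeries ℚ) * (1 - (X : PowerSeries ℚ) ^ 2)⁻¹) := by
      apply coeff_mul_congr
      intro j hj
      rw [map_sub, coeff_X_pow]
      have h0 : ¬ (j = 2 * (M + 1)) := by omega
      simp [h0]
    rw [hcoe, one_mul]
  | succ L hL IH =>
    intro i hi
    obtain ⟨c, rfl⟩ : ∃ c, L = c + 1 := ⟨L - 1, by omega⟩
    set S2 : PowerSeries ℚ :=
      ∑ n ∈ Finset.range (M + 1), (X : PowerSeries ℚ) ^ (2 * n) * gb (c + 1 + 1 + n - 1) n with hS2def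
    set S1 : PowerSeries ℚ :=
      ∑ n ∈ Finset.range (M + 1), (X : PowerSeries ℚ) ^ (2 * n) * gb (c + 1 + n - 1) n with hS1def
    -- rewrite indices
    have idx2 : ∀ n : ℕ, c + 1 + 1 + n - 1 = c + 1 + n := fun n => by omega
    have idx1 : ∀ n : ℕ, c + 1 + n - 1 = c + n := fun n => by omega
    set T1 : PowerSeries ℚ :=
      ∑ b ∈ Finset.range M, (X : PowerSeries ℚ) ^ (2 * (b + 1)) * gb (c + 1 + b) (b + 1) with hT1
    set T2 : PowerSeries ℚ :=
      ∑ b ∈ Finset.range M, (X : PowerSeries ℚ) ^ (2 * b) * gb (c + 1 + b) b with hT2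
    have h1 : S2 = T1 + (X : PowerSeries ℚ) ^ (c + 3) * T2 + 1 := by
      rw [hS2def]
      simp only [idx2]
      rw [Finset.sum_range_succ']
      have : ∀ b ∈ Finset.range M,
          (X : PowerSeries ℚ) ^ (2 * (b + 1)) * gb (c + 1 + (b + 1)) (b + 1)
            = (X : PowerSeries ℚ) ^ (2 * (b + 1)) * gb (c + 1 + b) (b + 1)
              + (X : PowerSeries ℚ) ^ (c + 3) * ((X : PowerSeries ℚ) ^ (2 * b) * gb (c + 1 + b) b) := by
        intro b _
        have e : c + 1 + (b + 1) = c + 1 + b + 1 := by omega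
        rw [e, pascal c b]
        ring
      rw [Finset.sum_congr rfl this, Finset.sum_add_distrib, ← Finset.mul_sum]
      rw [mul_zero, gb_zero, pow_zero, one_mul]
    have h2 : S1 = T1 + 1 := by
      rw [hS1def]
      simp only [idx1]
      rw [Finset.sum_range_succ']
      congr 1
      · refine Finset.sum_congr rfl fun b _ => ?_
        have e : c + (b + 1) = c + 1 + b := by omega
        rw [e]
      · rw [mul_zero, gb_zero, pow_zero, one_mul]
    have h3 : S2 = T2 + (X : PowerSeries ℚ) ^ (2 * M) * gb (c + 1 + M) M := by
      rw [hS2def]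
      simp only [idx2]
      rw [Finset.sum_range_succ]
    have hu := sub_mul_inv (c + 3) (by omega)
    have hsplit : S2 = (S1 - (X : PowerSeries ℚ) ^ (c + 3 + 2 * M) * gb (c + 1 + M) M)
        * (1 - (X : PowerSeries ℚ) ^ (c + 3))⁻¹ := by
      have hmul : S2 * (1 - (X : PowerSeries ℚ) ^ (c + 3))
          = S1 - (X : PowerSeries ℚ) ^ (c + 3 + 2 * M) * gb (c + 1 + M) M := by
        linear_combination h1 - h2 - (X : PowerSeries ℚ) ^ (c + 3) * h3
      calc S2 = S2 * ((1 - (X : PowerSeries ℚ) ^ (c + 3)) * (1 - X ^ (c + 3))⁻¹) := by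
            rw [hu, mul_one]
        _ = (S2 * (1 - (X : PowerSeries ℚ) ^ (c + 3))) * (1 - X ^ (c + 3))⁻¹ := by ring
        _ = _ := by rw [hmul]
    have hqinv : (qp 2 (c + 1 + 1))⁻¹ = (qp 2 (c + 1))⁻¹ * (1 - (X : PowerSeries ℚ) ^ (c + 3))⁻¹ := by
      rw [qp2_succ (c + 1), PowerSeries.mul_inv_rev]
      have e : c + 1 + 2 = c + 3 := by omega
      rw [e, mul_comm]
    rw [hqinv, hsplit]
    apply coeff_mul_congr
    intro j hj
    rw [map_sub, coeff_X_pow_mul_zero _ (by omega), sub_zero]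
    exact IH j (by omega)

end Stmt15

open Stmt15 in
/-- **Theorem 5.2.** For `L ≥ 1`, `G_{L,1}(q) = H_{L,1}(q)/(1-q^L)`, stated coefficient-wise
(the infinite sum in `G_{L,1}` is truncated exactly at `n ≤ N`). -/
theorem stmt15 (L : ℕ) (hL : 1 ≤ L) (N : ℕ) :
    coeff N ((X : PowerSeries ℚ) * (qp 1 (L + 1))⁻¹)
        - (∑ n ∈ Finset.Icc 1 N,
            coeff N ((X : PowerSeries ℚ) ^ (2 * n) * (1 - X ^ n)⁻¹ * gb (L + n - 1) (n - 1)))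
      = coeff N
          (((X : PowerSeries ℚ) * (qp 1 (L - 1) * (1 - X ^ (L + 1)))⁻¹ - ((qp 2 L)⁻¹ - 1))
            * (1 - (X : PowerSeries ℚ) ^ L)⁻¹) := by
  obtain ⟨c, rfl⟩ : ∃ c, L = c + 1 := ⟨L - 1, by omega⟩
  have hL1 : c + 1 - 1 = c := by omega
  -- first term
  have hfac : qp 1 (c + 1 + 1) = (qp 1 c * (1 - (X : PowerSeries ℚ) ^ (c + 1 + 1))) * (1 - X ^ (c + 1)) := by
    rw [qp_succ (c + 1), qp_succ c]
    ring
  have hfirst : (X : PowerSeries ℚ) * (qp 1 (c + 1 + 1))⁻¹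
      = ((X : PowerSeries ℚ) * (qp 1 c * (1 - X ^ (c + 1 + 1)))⁻¹) * (1 - X ^ (c + 1))⁻¹ := by
    rw [hfac, PowerSeries.mul_inv_rev]
    ring
  -- rewrite each summand
  have hterm : ∀ n ∈ Finset.Icc 1 N,
      coeff N ((X : PowerSeries ℚ) ^ (2 * n) * (1 - X ^ n)⁻¹ * gb (c + 1 + n - 1) (n - 1))
        = coeff N (((X : PowerSeries ℚ) ^ (2 * n) * gb (c + 1 + n - 1) n) * (1 - X ^ (c + 1))⁻¹) := by
    intro n hn
    rw [Finset.mem_Icc] at hn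
    obtain ⟨b, rfl⟩ : ∃ b, n = b + 1 := ⟨n - 1, by omega⟩
    have e1 : c + 1 + (b + 1) - 1 = c + b + 1 := by omega
    have e2 : b + 1 - 1 = b := by omega
    rw [e1, e2, termA c b]
  rw [Finset.sum_congr rfl hterm]
  -- main q-binomial identity
  have hmain : coeff N (((qp 2 (c + 1))⁻¹ - 1) * (1 - (X : PowerSeries ℚ) ^ (c + 1))⁻¹)
      = ∑ n ∈ Finset.Icc 1 N,
          coeff N (((X : PowerSeries ℚ) ^ (2 * n) * gb (c + 1 + n - 1) n) * (1 - X ^ (c + 1))⁻¹) := by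
    have hins : Finset.range (N + 1) = insert 0 (Finset.Icc 1 N) := by
      ext x; simp only [Finset.mem_range, Finset.mem_insert, Finset.mem_Icc]; omega
    have hsum : (∑ n ∈ Finset.range (N + 1), (X : PowerSeries ℚ) ^ (2 * n) * gb (c + 1 + n - 1) n)
        = 1 + ∑ n ∈ Finset.Icc 1 N, (X : PowerSeries ℚ) ^ (2 * n) * gb (c + 1 + n - 1) n := by
      rw [hins, Finset.sum_insert (by simp)]
      congr 1
      have e : c + 1 + 0 - 1 = c := by omega
      rw [mul_zero, e, gb_zero, pow_zero, one_mul]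
    have hcong : ∀ j ≤ N, coeff j ((qp 2 (c + 1))⁻¹ - 1)
        = coeff j (∑ n ∈ Finset.Icc 1 N, (X : PowerSeries ℚ) ^ (2 * n) * gb (c + 1 + n - 1) n) := by
      intro j hj
      have := qbin N (c + 1) (by omega) j hj
      rw [hsum] at this
      rw [map_sub, this, map_add]
      simp
    rw [coeff_mul_congr hcong, Finset.sum_mul, map_sum]
  rw [hL1, hfirst, sub_mul, map_sub, hmain]
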